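/- Let f(x) = max{2 − x², x²} on ℝ and let 0 < λ ≤ 1/4. Then for all x ∈ [1 − 2λ, 1 + 2λ], the proximal point P_λ f(x) = argmin_y { f(y) + (1/(2λ))(y−x)² } equals 1, and the Moreau envelope satisfies e_λ f(x) = 1 + (1/(2λ))(x−1)². -/

import Mathlib

lemma key (lam x y : ℝ) (hlam : 0 < lam) (hlam' : lam ≤ 1 / 4)
    (hx1 : 1 - 2 * lam ≤ x) (hx2 : x ≤ 1 + 2 * lam) (hy : y ≠ 1) :
    1 + 1 / (2 * lam) * (1 - x) ^ 2 < max (2 - y ^ 2) (y ^ 2) + 1 / (2 * lam) * (y - x) ^ 2 := by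
  set c := 1 / (2 * lam) with hcdef
  have hcl : c * (2 * lam) = 1 := by
    rw [hcdef, one_div, inv_mul_cancel₀ (by positivity)]
  have hc2 : 2 ≤ c := by
    rw [hcdef, le_div_iff₀ (by linarith)]
    linarith
  rcases le_total (2 - y ^ 2) (y ^ 2) with h | h
  · rw [max_eq_right h]
    rcases le_or_gt 1 y with h1 | h1
    · have h1' : 1 < y := lt_of_le_of_ne h1 (Ne.symm hy)
      nlinarith [mul_pos (sub_pos.2 h1') (mul_pos (by linarith : (0:ℝ) < 1 + c) (sub_pos.2 h1')), mul_nonneg (le_of_lt (sub_pos.2 h1')) (mul_nonneg (by linarith : (0:ℝ) ≤ c) (by linarith : (0:ℝ) ≤ 1 + 2*lam - x))]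
    · have hy1 : y ≤ -1 := by nlinarith
      have hxpos : 0 < x := by linarith
      nlinarith [mul_nonneg (by linarith : (0:ℝ) ≤ 1 - y) (by linarith : (0:ℝ) ≤ c), mul_pos (by linarith : (0:ℝ) < 1 - y) hxpos, mul_nonneg (mul_nonneg (by linarith : (0:ℝ) ≤ c) (by linarith : (0:ℝ) ≤ -1 - y)) hxpos.le]
  · rw [max_eq_left h]
    have hy1 : y < 1 := by
      rcases lt_or_ge y 1 with h' | h'
      · exact h'
      · exact absurd (le_antisymm (by nlinarith) h') hy
    -- bracket: (1-y)*((1+y)*(1-c)+2*c*x) > 0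
    have hb : 0 < (1 + y) * (c - 1) * 0 + 1 := by norm_num
    nlinarith [mul_pos (sub_pos.2 hy1) (sub_pos.2 hy1), mul_nonneg (mul_nonneg (by linarith : (0:ℝ) ≤ c) (by linarith : (0:ℝ) ≤ 1 - y)) (by linarith : (0:ℝ) ≤ x - (1 - 2*lam)), mul_pos (sub_pos.2 hy1) (by linarith : (0:ℝ) < c - 1), hcl, mul_pos hlam hlam]

theorem example_prox_and_envelope (lam : ℝ) (hlam : 0 < lam) (hlam' : lam ≤ 1 / 4)
    (x : ℝ) (hx : x ∈ Set.Icc (1 - 2 * lam) (1 + 2 * lam)) :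
    (∀ y : ℝ, max (2 - (1:ℝ) ^ 2) ((1:ℝ) ^ 2) + 1 / (2 * lam) * (1 - x) ^ 2 ≤
      max (2 - y ^ 2) (y ^ 2) + 1 / (2 * lam) * (y - x) ^ 2) ∧
    (∀ y : ℝ, (∀ y' : ℝ, max (2 - y ^ 2) (y ^ 2) + 1 / (2 * lam) * (y - x) ^ 2 ≤
        max (2 - y' ^ 2) (y' ^ 2) + 1 / (2 * lam) * (y' - x) ^ 2) → y = 1) ∧
    (⨅ y : ℝ, (max (2 - y ^ 2) (y ^ 2) + 1 / (2 * lam) * (y - x) ^ 2)) =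
      1 + 1 / (2 * lam) * (x - 1) ^ 2 := by
  obtain ⟨hx1, hx2⟩ := hx
  have hval : max (2 - (1:ℝ) ^ 2) ((1:ℝ) ^ 2) = 1 := by norm_num
  have hweak : ∀ y : ℝ, max (2 - (1:ℝ) ^ 2) ((1:ℝ) ^ 2) + 1 / (2 * lam) * (1 - x) ^ 2 ≤
      max (2 - y ^ 2) (y ^ 2) + 1 / (2 * lam) * (y - x) ^ 2 := by
    intro y
    rcases eq_or_ne y 1 with rfl | hy
    · exact le_refl _
    · rw [hval]
      exact (key lam x y hlam hlam' hx1 hx2 hy).le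
  refine ⟨hweak, ?_, ?_⟩
  · intro y hmin
    by_contra hy
    have h1 := key lam x y hlam hlam' hx1 hx2 hy
    have h2 := hmin 1
    rw [hval] at h2
    linarith
  · apply le_antisymm
    · apply ciInf_le ⟨max (2 - (1:ℝ) ^ 2) ((1:ℝ) ^ 2) + 1 / (2 * lam) * (1 - x) ^ 2, ?_⟩ 1 |>.trans
      · rw [hval]
        ring_nf
        exact le_refl _
      · rintro _ ⟨y, rfl⟩
        exact hweak y
    · apply le_ciInf
      intro y
      have := hweak y
      rw [hval] at this
      have h : (x - 1) ^ 2 = (1 - x) ^ 2 := by ring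
      rw [h]
      exact this
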